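/- If W is a set of mutually disjoint positive elements in a universally complete Riesz space E, and R is a Dedekind complete Riesz subspace of E closed under countable suprema that contains u ∧ n·e for every u ∈ W and n ∈ ℕ (where e is a weak order unit of E in R), then the supremum of W belongs to R whenever for each n the family {u ∧ n·e : u ∈ W} has its supremum in R and these suprema increase to an element of R. -/

import Mathlib

/-- Infinite distributivity in a conditionally complete lattice-ordered group. -/
lemma inf_csSup_eq_csSup_image {E : Type*} [ConditionallyCompleteLattice E]
    [AddCommGroup E] [CovariantClass E E (· + ·) (· ≤ ·)]
    (a : E) (S : Set E) (hne : S.Nonempty) (hbdd : BddAbove S) :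
    a ⊓ sSup S = sSup ((a ⊓ ·) '' S) := by
  have hbi : BddAbove ((a ⊓ ·) '' S) := by
    refine ⟨a ⊓ sSup S, ?_⟩
    rintro x ⟨s, hs, rfl⟩
    exact inf_le_inf_left a (le_csSup hbdd hs)
  set c := sSup ((a ⊓ ·) '' S) with hc
  apply le_antisymm
  · -- a ⊓ sSup S ≤ c
    have h1 : ∀ s ∈ S, s ≤ c + (a ⊔ sSup S) - a := by
      intro s hs
      have h2 : a ⊓ s ≤ c := le_csSup hbi ⟨s, hs, rfl⟩
      have h3 : a ⊔ s ≤ a ⊔ sSup S := sup_le_sup_left (le_csSup hbdd hs) a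
      have h4 : s = a ⊓ s + (a ⊔ s) - a := by
        rw [inf_add_sup]; abel
      rw [h4]
      exact sub_le_sub_right (add_le_add h2 h3) a
    have h5 : sSup S ≤ c + (a ⊔ sSup S) - a := csSup_le hne h1
    have h6 : a ⊓ sSup S = a + sSup S - (a ⊔ sSup S) := by
      rw [← inf_add_sup a (sSup S)]; abel
    rw [h6]
    calc a + sSup S - (a ⊔ sSup S)
        ≤ a + (c + (a ⊔ sSup S) - a) - (a ⊔ sSup S) := by
          exact sub_le_sub_right (add_le_add (le_refl a) h5) _
      _ = c := by abel
  · -- c ≤ a ⊓ sSup S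
    apply csSup_le (hne.image _)
    rintro x ⟨s, hs, rfl⟩
    exact inf_le_inf_left a (le_csSup hbdd hs)

/-- In a universally complete Riesz space `E` with weak order unit `e`,
if `W` is a set of mutually disjoint positive elements and `R` is a (Dedekind complete)
Riesz subspace containing `u ⊓ n • e` for all `u ∈ W`, `n ∈ ℕ`, then `sSup W ∈ R`
provided each `sSup {u ⊓ n • e | u ∈ W} ∈ R` and these suprema increase to an element of `R`. -/
theorem sSup_mem_of_disjoint_truncations {E : Type*} [ConditionallyCompleteLattice E]
    [AddCommGroup E] [CovariantClass E E (· + ·) (· ≤ ·)] [Module ℝ E]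
    (e : E) (he : 0 ≤ e)
    -- `e` is a weak order unit: every positive element is the supremum of its truncations by `n • e`
    (hwou : ∀ f : E, 0 ≤ f → f = sSup {x : E | ∃ n : ℕ, x = f ⊓ n • e})
    (R : Set E) (heR : e ∈ R)
    (W : Set E) (hWpos : ∀ u ∈ W, 0 ≤ u)
    (hWdisj : ∀ u ∈ W, ∀ v ∈ W, u ≠ v → u ⊓ v = 0)
    (hWbdd : BddAbove W) (hWne : W.Nonempty)
    (hmem : ∀ u ∈ W, ∀ n : ℕ, u ⊓ n • e ∈ R)
    (hsupn : ∀ n : ℕ, sSup {x : E | ∃ u ∈ W, x = u ⊓ n • e} ∈ R)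
    (hlim : sSup {x : E | ∃ n : ℕ, x = sSup {y : E | ∃ u ∈ W, y = u ⊓ n • e}} ∈ R) :
    sSup W ∈ R := by
  obtain ⟨u0, hu0⟩ := hWne
  have hfpos : 0 ≤ sSup W := (hWpos u0 hu0).trans (le_csSup hWbdd hu0)
  -- truncations of sSup W coincide with suprema of truncations
  have htrunc : ∀ n : ℕ, sSup W ⊓ n • e = sSup {y : E | ∃ u ∈ W, y = u ⊓ n • e} := by
    intro n
    have := inf_csSup_eq_csSup_image ((n : ℕ) • e) W ⟨u0, hu0⟩ hWbdd
    have himg : ((n • e) ⊓ ·) '' W = {y : E | ∃ u ∈ W, y = u ⊓ n • e} := by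
      ext y
      constructor
      · rintro ⟨u, hu, rfl⟩; exact ⟨u, hu, (inf_comm _ _)⟩
      · rintro ⟨u, hu, rfl⟩; exact ⟨u, hu, (inf_comm _ _)⟩
    rw [inf_comm, this, himg]
  have hsets : {x : E | ∃ n : ℕ, x = sSup W ⊓ n • e}
      = {x : E | ∃ n : ℕ, x = sSup {y : E | ∃ u ∈ W, y = u ⊓ n • e}} := by
    ext x
    constructor
    · rintro ⟨n, rfl⟩; exact ⟨n, (htrunc n).symm ▸ rfl⟩
    · rintro ⟨n, rfl⟩; exact ⟨n, (htrunc n).symm⟩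
  have := hwou (sSup W) hfpos
  rw [this, hsets]
  exact hlim
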